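/- For every nonnegative integer n, the ratio B_{2n}(t)/B_{2n+1}(t) is strictly decreasing in t on the interval (0, 1/2) and also strictly decreasing on (1/2, 1). -/

import Mathlib

open Set Real Filter

noncomputable def B (n : ℕ) (t : ℝ) : ℝ := Polynomial.aeval t (Polynomial.bernoulli n)

noncomputable def Bnum (n : ℕ) : ℝ := ((bernoulli n : ℚ) : ℝ)

section aux
open Polynomial

lemma B_eq (n : ℕ) (t : ℝ) : B n t = ((Polynomial.bernoulli n).map (algebraMap ℚ ℝ)).eval t := by
  simp [B, Polynomial.aeval_def, Polynomial.eval_map]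

lemma B_hasDerivAt (n : ℕ) (t : ℝ) : HasDerivAt (B n) (n * B (n-1) t) t := by
  have h := Polynomial.hasDerivAt ((Polynomial.bernoulli n).map (algebraMap ℚ ℝ)) t
  have e : (Polynomial.derivative ((Polynomial.bernoulli n).map (algebraMap ℚ ℝ))).eval t
      = n * B (n-1) t := by
    rw [Polynomial.derivative_map, Polynomial.derivative_bernoulli, B_eq]
    simp [Polynomial.eval_map]
  rw [e] at h
  exact h.congr_of_eventuallyEq (by filter_upwards with x; rw [B_eq])

lemma B_cont (n : ℕ) : Continuous (B n) := by
  have : (B n) = fun t => ((Polynomial.bernoulli n).map (algebraMap ℚ ℝ)).eval t := by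
    funext t; exact B_eq n t
  rw [this]; exact Polynomial.continuous _

lemma B_zero (t : ℝ) : B 0 t = 1 := by simp [B]

lemma B_one (t : ℝ) : B 1 t = t - 1/2 := by
  simp [B, Polynomial.bernoulli, Finset.sum_range_succ, _root_.bernoulli_one]
  ring

lemma bern_symm : ∀ n : ℕ, (Polynomial.bernoulli n).comp (1 - Polynomial.X) =
    Polynomial.C ((-1:ℚ)^n) * Polynomial.bernoulli n := by
  intro n
  induction n with
  | zero => simp
  | succ k ih =>
    set p := (Polynomial.bernoulli (k+1)).comp (1 - Polynomial.X)
      - Polynomial.C ((-1:ℚ)^(k+1)) * Polynomial.bernoulli (k+1) with hp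
    have hd : Polynomial.derivative p = 0 := by
      rw [hp, derivative_sub, derivative_comp, Polynomial.derivative_bernoulli_add_one,
        derivative_mul, derivative_C, Polynomial.derivative_bernoulli_add_one]
      simp only [derivative_sub, derivative_one, derivative_X, zero_sub, mul_comp,
        natCast_comp, add_comp, one_comp, pow_succ, map_mul, map_neg, map_one]
      rw [ih]
      ring
    have hc : p = Polynomial.C (p.coeff 0) := Polynomial.eq_C_of_derivative_eq_zero hd
    have h0 : p.eval 0 = 0 := by
      rw [hp]
      simp only [Polynomial.eval_sub, Polynomial.eval_comp, Polynomial.eval_one,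
        Polynomial.eval_X, sub_zero, Polynomial.eval_mul, Polynomial.eval_C,
        Polynomial.bernoulli_eval_one, Polynomial.bernoulli_eval_zero]
      rw [bernoulli'_eq_bernoulli]
      ring
    have hz : p = 0 := by
      rw [hc] at h0 ⊢
      simpa using h0
    exact sub_eq_zero.mp (hp ▸ hz)

lemma B_symm (n : ℕ) (x : ℝ) : B n (1 - x) = (-1:ℝ)^n * B n x := by
  have h1 : (1 - x : ℝ) = Polynomial.aeval x (1 - Polynomial.X : ℚ[X]) := by simp
  rw [B, h1, ← Polynomial.aeval_comp, bern_symm]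
  simp [B]

lemma B_odd_half (n : ℕ) : B (2*n+1) (1/2) = 0 := by
  have h := B_symm (2*n+1) (1/2)
  rw [show (1 - 1/2 : ℝ) = 1/2 by norm_num, Odd.neg_one_pow ⟨n, by ring⟩] at h
  linarith

lemma B_val_zero (n : ℕ) : B n 0 = ((bernoulli n : ℚ) : ℝ) := by
  rw [B_eq, Polynomial.eval_map, Polynomial.eval₂_at_zero,
    Polynomial.coeff_zero_eq_eval_zero, Polynomial.bernoulli_eval_zero]
  rfl

lemma B_odd_zero (n : ℕ) : B (2*n+3) 0 = 0 := by
  rw [B_val_zero, bernoulli_eq_bernoulli'_of_ne_one (by omega),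
    bernoulli'_eq_zero_of_odd ⟨n+1, by ring⟩ (by omega)]
  norm_num

lemma B_odd_pos : ∀ n : ℕ, ∀ t ∈ Ioo (0:ℝ) (1/2), 0 < (-1:ℝ)^(n+1) * B (2*n+1) t := by
  intro n
  induction n with
  | zero =>
    intro t ht
    rw [show 2*0+1 = 1 from rfl, B_one]
    nlinarith [ht.2]
  | succ k ih =>
    -- the even polynomial, normalized to be increasing
    set g : ℝ → ℝ := fun t => (-1:ℝ)^(k+1) * B (2*k+2) t with hgdef
    have hg : ∀ t : ℝ, HasDerivAt g ((2*k+2) * ((-1:ℝ)^(k+1) * B (2*k+1) t)) t := by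
      intro t
      have := (B_hasDerivAt (2*k+2) t).const_mul ((-1:ℝ)^(k+1))
      rw [show 2*k+2-1 = 2*k+1 by omega] at this
      refine this.congr_deriv ?_
      push_cast
      ring
    have hgc : Continuous g := continuous_const.mul (B_cont (2*k+2))
    have hgmono : StrictMonoOn g (Icc (0:ℝ) (1/2)) := by
      apply strictMonoOn_of_deriv_pos (convex_Icc _ _) hgc.continuousOn
      intro x hx
      rw [interior_Icc] at hx
      rw [(hg x).deriv]
      have := ih x hx
      positivity
    -- the next odd polynomial, normalized
    set h : ℝ → ℝ := fun t => (-1:ℝ)^(k+2) * B (2*k+3) t with hhdef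
    have hh : ∀ t : ℝ, HasDerivAt h (-((2*k+3) * g t)) t := by
      intro t
      have := (B_hasDerivAt (2*k+3) t).const_mul ((-1:ℝ)^(k+2))
      rw [show 2*k+3-1 = 2*k+2 by omega] at this
      refine this.congr_deriv ?_
      simp only [hgdef]
      push_cast
      rw [pow_succ]
      ring
    have hhc : Continuous h := continuous_const.mul (B_cont (2*k+3))
    have hh0 : h 0 = 0 := by simp [hhdef, B_odd_zero]
    have hhhalf : h (1/2) = 0 := by
      have := B_odd_half (k+1)
      simp only [hhdef]
      rw [show 2*k+3 = 2*(k+1)+1 by ring, this, mul_zero]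
    -- Rolle gives a zero of g in the open interval
    obtain ⟨c, hc, hc0⟩ := exists_deriv_eq_zero (by norm_num : (0:ℝ) < 1/2)
      hhc.continuousOn (hh0.trans hhhalf.symm)
    have hgc0 : g c = 0 := by
      rw [(hh c).deriv, neg_eq_zero, mul_eq_zero] at hc0
      rcases hc0 with h1 | h1
      · exfalso
        have : (0:ℝ) < 2*(k:ℝ)+3 := by positivity
        linarith
      · exact h1
    -- h is positive on (0, c] and on [c, 1/2)
    intro t ht
    rw [show 2*(k+1)+1 = 2*k+3 by ring, show k+1+1 = k+2 from rfl]
    show 0 < (-1:ℝ)^(k+2) * B (2*k+3) t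
    change 0 < h t
    rcases le_or_gt t c with htc | htc
    · -- h strictly increasing on [0, c]
      have hmono : StrictMonoOn h (Icc (0:ℝ) c) := by
        apply strictMonoOn_of_deriv_pos (convex_Icc _ _) hhc.continuousOn
        intro x hx
        rw [interior_Icc] at hx
        rw [(hh x).deriv]
        have hgx : g x < 0 := by
          have := hgmono ⟨hx.1.le, (hx.2.trans hc.2).le⟩ ⟨hc.1.le, hc.2.le⟩ hx.2
          rw [hgc0] at this
          exact this
        nlinarith [hgx]
      have := hmono ⟨le_refl 0, (le_trans ht.1.le htc)⟩ ⟨ht.1.le, htc⟩ ht.1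
      rw [hh0] at this
      exact this
    · -- h strictly decreasing on [c, 1/2]
      have hanti : StrictAntiOn h (Icc c (1/2:ℝ)) := by
        apply strictAntiOn_of_deriv_neg (convex_Icc _ _) hhc.continuousOn
        intro x hx
        rw [interior_Icc] at hx
        rw [(hh x).deriv]
        have hgx : 0 < g x := by
          have := hgmono ⟨hc.1.le, hc.2.le⟩ ⟨(hc.1.trans hx.1).le, hx.2.le.trans (by norm_num)⟩ hx.1
          rw [hgc0] at this
          exact this
        nlinarith [hgx]
      have := hanti ⟨htc.le, ht.2.le⟩ ⟨hc.2.le, le_refl _⟩ ht.2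
      rw [hhhalf] at this
      exact this
end aux

lemma B_odd_ne (n : ℕ) {t : ℝ} (ht : t ∈ Ioo (0:ℝ) (1/2)) : B (2*n+1) t ≠ 0 := by
  intro h
  have := B_odd_pos n t ht
  rw [h, mul_zero] at this
  exact lt_irrefl 0 this

lemma stmt3_first (n : ℕ) :
    StrictAntiOn (fun t : ℝ => B (2*n) t / B (2*n+1) t) (Ioo (0:ℝ) (1/2)) := by
  apply strictAntiOn_of_deriv_neg (convex_Ioo _ _)
  · exact ContinuousOn.div (B_cont (2*n)).continuousOn (B_cont (2*n+1)).continuousOn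
      (fun t ht => B_odd_ne n ht)
  · rw [interior_Ioo]
    intro t ht
    have hne := B_odd_ne n ht
    have hd : HasDerivAt (fun t : ℝ => B (2*n) t / B (2*n+1) t)
        (((2*n : ℕ) * B (2*n-1) t * B (2*n+1) t
          - B (2*n) t * ((2*n+1 : ℕ) * B (2*n) t)) / (B (2*n+1) t)^2) t := by
      have h1 := B_hasDerivAt (2*n) t
      have h2 := B_hasDerivAt (2*n+1) t
      rw [show 2*n+1-1 = 2*n by omega] at h2
      exact h1.div h2 hne
    rw [hd.deriv]
    apply div_neg_of_neg_of_pos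
    · rcases n with _ | m
      · norm_num [B_zero]
      · have h1 := B_odd_pos m t ht
        have h2 := B_odd_pos (m+1) t ht
        rw [show 2*(m+1)-1 = 2*m+1 by omega]
        have he : ((-1:ℝ)^(m+1))^2 = 1 := by
          rw [← pow_mul, pow_mul']
          norm_num
        rw [pow_succ] at h2
        have hm := mul_pos h1 h2
        have hre : ((-1:ℝ)^(m+1) * B (2*m+1) t) * (((-1:ℝ)^(m+1) * -1) * B (2*(m+1)+1) t)
            = -(((-1:ℝ)^(m+1))^2) * (B (2*m+1) t * B (2*(m+1)+1) t) := by ring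
        rw [hre, he] at hm
        have hprod : B (2*m+1) t * B (2*(m+1)+1) t < 0 := by linarith
        have hsq : (0:ℝ) ≤ B (2*(m+1)) t ^ 2 := sq_nonneg _
        push_cast
        nlinarith [hprod, hsq]
    · exact pow_two_pos_of_ne_zero hne

lemma stmt3_reflect (n : ℕ) (t : ℝ) :
    B (2*n) t / B (2*n+1) t = -(B (2*n) (1-t) / B (2*n+1) (1-t)) := by
  rw [B_symm (2*n) t, B_symm (2*n+1) t, Even.neg_one_pow ⟨n, by ring⟩,
    Odd.neg_one_pow ⟨n, by ring⟩, one_mul, neg_one_mul, div_neg, neg_neg]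

theorem stmt3 (n : ℕ) :
    StrictAntiOn (fun t : ℝ => B (2*n) t / B (2*n+1) t) (Ioo (0:ℝ) (1/2)) ∧
    StrictAntiOn (fun t : ℝ => B (2*n) t / B (2*n+1) t) (Ioo (1/2:ℝ) 1) := by
  refine ⟨stmt3_first n, ?_⟩
  intro x hx y hy hxy
  have hx' : 1 - x ∈ Ioo (0:ℝ) (1/2) := ⟨by linarith [hx.2], by linarith [hx.1]⟩
  have hy' : 1 - y ∈ Ioo (0:ℝ) (1/2) := ⟨by linarith [hy.2], by linarith [hy.1]⟩
  have h := stmt3_first n hy' hx' (by linarith)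
  simp only
  rw [stmt3_reflect n x, stmt3_reflect n y]
  simp only [sub_sub_cancel] at *
  linarith
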